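/- arXiv:1506.01345 — 3 statements merged into one kernel-verified Lean document; each statement's English description precedes it below -/
import Mathlib

section
/- If π ∨ ρ ≠ 1_n in NC(n), then the meandric system M_{π,ρ} is reducible, i.e., there exists a proper subinterval of {1,...,2n} invariant under M_{π,ρ}. -/
open scoped Classical

/-- A setoid (partition) of `Fin n` is non-crossing if there is no crossing
`a < b < c < d` with `a ∼ c`, `b ∼ d` but `a` and `b` in distinct blocks. -/
def IsNC {n : ℕ} (S : Setoid (Fin n)) : Prop :=
  ∀ a b c d : Fin n, a < b → b < c → c < d → S.r a c → S.r b d → S.r a b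

/-- A partition is a pairing if every block has exactly two elements. -/
def IsPairing {m : ℕ} (T : Setoid (Fin m)) : Prop :=
  ∀ x : Fin m, ∃ y : Fin m, y ≠ x ∧ T.r x y ∧ ∀ z : Fin m, T.r x z → z = x ∨ z = y

/-- The block of `i` in the partition `S`, as a finset. -/
noncomputable def blockOf {n : ℕ} (S : Setoid (Fin n)) (i : Fin n) : Finset (Fin n) :=
  Finset.univ.filter (fun j => S.r i j)

lemma blockOf_nonempty {n : ℕ} (S : Setoid (Fin n)) (i : Fin n) :
    (blockOf S i).Nonempty :=
  ⟨i, by simp [blockOf, S.iseqv.refl i]⟩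

/-- The permutation `P_S` which performs an increasing cycle on every block of `S`:
it sends `i` to the next larger element of its block, or to the minimum of the
block if `i` is the largest element of its block. -/
noncomputable def nextP {n : ℕ} (S : Setoid (Fin n)) (i : Fin n) : Fin n :=
  if h : ((blockOf S i).filter (fun j => i < j)).Nonempty
  then ((blockOf S i).filter (fun j => i < j)).min' h
  else (blockOf S i).min' (blockOf_nonempty S i)

/-- The inverse permutation `P_S⁻¹` (decreasing cycle on every block of `S`). -/
noncomputable def prevP {n : ℕ} (S : Setoid (Fin n)) (i : Fin n) : Fin n :=
  if h : ((blockOf S i).filter (fun j => j < i)).Nonempty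
  then ((blockOf S i).filter (fun j => j < i)).max' h
  else (blockOf S i).max' (blockOf_nonempty S i)

/-- `0`-indexed version of the point `2i-1` of `{1,…,2n}`. -/
def dEven {n : ℕ} (j : Fin n) : Fin (2*n) := ⟨2*j.val, by have := j.isLt; omega⟩

/-- `0`-indexed version of the point `2i` of `{1,…,2n}`. -/
def dOdd {n : ℕ} (j : Fin n) : Fin (2*n) := ⟨2*j.val+1, by have := j.isLt; omega⟩

/-- The doubling construction `π ↦ A(π)`: the pairing of `{1,…,2n}` generated by
pairing each point `2i` with `2P_π(i) - 1`, so that the associated permutation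
satisfies `P_{A(π)}(2i) = 2P_π(i) - 1` and `P_{A(π)}(2i-1) = 2P_π⁻¹(i)`. -/
noncomputable def archSetoid {n : ℕ} (S : Setoid (Fin n)) : Setoid (Fin (2*n)) :=
  Relation.EqvGen.setoid (fun a b => ∃ j : Fin n, a = dOdd j ∧ b = dEven (nextP S j))

/-- The meandric system permutation `M_{π,ρ} ∈ S_{2n}`, defined by
`M_{π,ρ}(2i-1) = 2P_π⁻¹(i)` and `M_{π,ρ}(2i) = 2P_ρ(i) - 1` (here `0`-indexed). -/
noncomputable def meanderMap {n : ℕ} (π ρ : Setoid (Fin n)) (x : Fin (2*n)) : Fin (2*n) :=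
  if x.val % 2 = 0
  then dOdd (prevP π ⟨x.val / 2, by have := x.isLt; omega⟩)
  else dEven (nextP ρ ⟨x.val / 2, by have := x.isLt; omega⟩)

/-- The orbit partition of a map. -/
def orbitSetoid {m : ℕ} (f : Fin m → Fin m) : Setoid (Fin m) :=
  Relation.EqvGen.setoid (fun a b => f a = b)

/-- Number of orbits of a map. -/
noncomputable def numOrbits {m : ℕ} (f : Fin m → Fin m) : ℕ :=
  Nat.card (Quotient (orbitSetoid f))

/-- `S` is a union of blocks of the partition `T`. -/
def IsBlockUnion {m : ℕ} (T : Setoid (Fin m)) (S : Set (Fin m)) : Prop :=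
  ∀ x ∈ S, ∀ y, T.r x y → y ∈ S

/-- `S` is invariant under `f`. -/
def MInvariant {m : ℕ} (f : Fin m → Fin m) (S : Set (Fin m)) : Prop :=
  ∀ x ∈ S, f x ∈ S

/-- The meandric system `M_{π,ρ}` is reducible: some proper subinterval
`{a,…,b}` of `{1,…,2n}` is invariant under `M_{π,ρ}`. -/
noncomputable def Reducible {n : ℕ} (π ρ : Setoid (Fin n)) : Prop :=
  ∃ a b : Fin (2*n), a ≤ b ∧ b.val - a.val < 2*n - 1 ∧
    MInvariant (meanderMap π ρ) {x | a ≤ x ∧ x ≤ b}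

/-- The join in the lattice of non-crossing partitions: the smallest
non-crossing partition above both `π` and `ρ`. -/
noncomputable def ncJoin {m : ℕ} (π ρ : Setoid (Fin m)) : Setoid (Fin m) :=
  sInf {τ | IsNC τ ∧ π ≤ τ ∧ ρ ≤ τ}

/-- The moment-cumulant formula of free probability: `mom n` is the sum over all
non-crossing partitions of `{1,…,n}` of the products of cumulants `κ` indexed
by the block sizes.  This uniquely determines the free cumulants `κ n`, `n ≥ 1`,
of a sequence of moments. -/
def MomCum {F : Type*} [Field F] (mom κ : ℕ → F) : Prop :=
  ∀ n : ℕ, 0 < n →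
    mom n = ∑ᶠ S ∈ {S : Setoid (Fin n) | IsNC S}, ∏ᶠ B ∈ Setoid.classes S, κ B.ncard

/-- The number of irreducible meandric systems on `2k` bridges, described as the
number of pairs `(π,ρ) ∈ NC(k)²` with `π ∨ ρ = 1_k`, `π ∧ ρ = 0_k`. -/
noncomputable def mirr (k : ℕ) : ℕ :=
  Nat.card {pr : Setoid (Fin k) × Setoid (Fin k) //
    IsNC pr.1 ∧ IsNC pr.2 ∧ ncJoin pr.1 pr.2 = ⊤ ∧ pr.1 ⊓ pr.2 = ⊥}

/-- The number of pairs `(π,ρ) ∈ NC(n)²` whose meandric system `M_{π,ρ}` has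
exactly `k` orbits (connected components). -/
noncomputable def mcount (n k : ℕ) : ℕ :=
  Nat.card {pr : Setoid (Fin n) × Setoid (Fin n) //
    IsNC pr.1 ∧ IsNC pr.2 ∧ numOrbits (meanderMap pr.1 pr.2) = k}

/-- The number of meanders on `2n` bridges. -/
noncomputable def meanderNum (n : ℕ) : ℕ := mcount n 1
lemma mem_blockOf {n : ℕ} {S : Setoid (Fin n)} {i j : Fin n} :
    j ∈ blockOf S i ↔ S.r i j := by simp [blockOf]

lemma nextP_rel {n : ℕ} (S : Setoid (Fin n)) (i : Fin n) : S.r i (nextP S i) := by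
  unfold nextP
  split
  · have := Finset.min'_mem _ ‹_›
    simp only [Finset.mem_filter, blockOf, Finset.mem_univ, true_and] at this
    exact this.1
  · have := Finset.min'_mem (blockOf S i) (blockOf_nonempty S i)
    simpa [blockOf] using this

lemma prevP_rel {n : ℕ} (S : Setoid (Fin n)) (i : Fin n) : S.r i (prevP S i) := by
  unfold prevP
  split
  · have := Finset.max'_mem _ ‹_›
    simp only [Finset.mem_filter, blockOf, Finset.mem_univ, true_and] at this
    exact this.1
  · have := Finset.max'_mem (blockOf S i) (blockOf_nonempty S i)
    simpa [blockOf] using this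

/-- If `π ∨ ρ ≠ 1_n` in `NC(n)` then `M_{π,ρ}` is reducible. -/
theorem reducible_of_ncJoin_ne_top (n : ℕ) (π ρ : Setoid (Fin n))
    (hπ : IsNC π) (hρ : IsNC ρ) (h : ncJoin π ρ ≠ ⊤) :
    Reducible π ρ := by
  set τ := ncJoin π ρ with hτdef
  have hNC : IsNC τ := by
    intro a b c d h1 h2 h3 hac hbd
    intro s hs
    exact hs.1 a b c d h1 h2 h3 (hac s hs) (hbd s hs)
  have hπτ : π ≤ τ := le_sInf fun σ hσ => hσ.2.1
  have hρτ : ρ ≤ τ := le_sInf fun σ hσ => hσ.2.2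
  have hn : 0 < n := by
    rcases Nat.eq_zero_or_pos n with h0 | h0
    · subst h0
      exact absurd (Setoid.ext fun x => x.elim0) h
    · exact h0
  -- choose a block of τ of minimal width
  obtain ⟨i, -, hmin⟩ := Finset.exists_min_image Finset.univ
    (fun i => ((blockOf τ i).max' (blockOf_nonempty τ i)).val
      - ((blockOf τ i).min' (blockOf_nonempty τ i)).val)
    (Finset.univ_nonempty_iff.2 (by exact ⟨⟨0, hn⟩⟩))
  set a := (blockOf τ i).min' (blockOf_nonempty τ i) with hadef
  set b := (blockOf τ i).max' (blockOf_nonempty τ i) with hbdef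
  have hia : τ.r i a := mem_blockOf.1 (Finset.min'_mem _ _)
  have hib : τ.r i b := mem_blockOf.1 (Finset.max'_mem _ _)
  have hai : a ≤ i := Finset.min'_le _ _ (mem_blockOf.2 (τ.iseqv.refl i))
  have hib' : i ≤ b := Finset.le_max' _ _ (mem_blockOf.2 (τ.iseqv.refl i))
  -- the block of i is the interval [a, b]
  have hint : ∀ x : Fin n, a ≤ x → x ≤ b → τ.r i x := by
    intro x hax hxb
    by_contra hx
    have hxa : x ≠ a := fun e => hx (e ▸ hia)
    have hxb' : x ≠ b := fun e => hx (e ▸ hib)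
    have hax' : a < x := lt_of_le_of_ne hax (Ne.symm hxa)
    have hxb'' : x < b := lt_of_le_of_ne hxb hxb'
    set a' := (blockOf τ x).min' (blockOf_nonempty τ x) with ha'def
    set b' := (blockOf τ x).max' (blockOf_nonempty τ x) with hb'def
    have hxa' : τ.r x a' := mem_blockOf.1 (Finset.min'_mem _ _)
    have hxb2 : τ.r x b' := mem_blockOf.1 (Finset.max'_mem _ _)
    have ha'x : a' ≤ x := Finset.min'_le _ _ (mem_blockOf.2 (τ.iseqv.refl x))
    have hxb3 : x ≤ b' := Finset.le_max' _ _ (mem_blockOf.2 (τ.iseqv.refl x))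
    have hab : τ.r a b := τ.iseqv.trans (τ.iseqv.symm hia) hib
    -- a' > a
    have haa' : a < a' := by
      rcases lt_trichotomy a' a with hlt | heq | hgt
      · -- crossing: a' < a < x < b, r a' x, r a b ⇒ r a' a
        have := hNC a' a x b hlt hax' hxb'' (τ.iseqv.symm hxa') hab
        exact absurd (τ.iseqv.trans hia (τ.iseqv.trans (τ.iseqv.symm this) (τ.iseqv.symm hxa'))) hx
      · exact absurd (τ.iseqv.trans hia (heq ▸ τ.iseqv.symm hxa')) hx
      · exact hgt
    -- b' < b
    have hbb' : b' < b := by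
      rcases lt_trichotomy b b' with hlt | heq | hgt
      · -- crossing: a < x < b < b', r a b, r x b' ⇒ r a x
        have := hNC a x b b' hax' hxb'' hlt hab hxb2
        exact absurd (τ.iseqv.trans hia this) hx
      · exact absurd (τ.iseqv.trans hib (heq ▸ τ.iseqv.symm hxb2)) hx
      · exact hgt
    have := hmin x (Finset.mem_univ x)
    simp only [← hadef, ← hbdef, ← ha'def, ← hb'def] at this
    have h1 : a.val < a'.val := haa'
    have h2 : b'.val < b.val := hbb'
    have h3 : a'.val ≤ x.val := ha'x
    have h4 : x.val ≤ b'.val := hxb3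
    have h5 : a.val ≤ i.val := hai
    have h6 : i.val ≤ b.val := hib'
    omega
  -- properness: b - a < n - 1
  have hba : b.val - a.val < n - 1 := by
    by_contra hcon
    push_neg at hcon
    have ha0 : a.val = 0 := by have := b.isLt; omega
    have hb1 : b.val = n - 1 := by have := b.isLt; have := a.isLt; omega
    apply h
    apply Setoid.ext
    intro u v
    simp only [Setoid.top_def]
    constructor
    · intro _; trivial
    · intro _
      have hu : τ.r i u := hint u (by simp [Fin.le_def, ha0]) (by simp [Fin.le_def, hb1]; omega)
      have hv : τ.r i v := hint v (by simp [Fin.le_def, ha0]) (by simp [Fin.le_def, hb1]; omega)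
      exact τ.iseqv.trans (τ.iseqv.symm hu) hv
  -- the invariant interval
  refine ⟨⟨2*a.val, by have := a.isLt; omega⟩, ⟨2*b.val+1, by have := b.isLt; omega⟩,
    by simp [Fin.le_def]; omega, by simp; omega, ?_⟩
  intro x hx
  simp only [Set.mem_setOf_eq, Fin.le_def] at hx ⊢
  obtain ⟨hx1, hx2⟩ := hx
  set j : Fin n := ⟨x.val / 2, by have := x.isLt; omega⟩ with hjdef
  have haj : a ≤ j := by simp [Fin.le_def, hjdef]; omega
  have hjb : j ≤ b := by simp [Fin.le_def, hjdef]; omega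
  have hij : τ.r i j := hint j haj hjb
  unfold meanderMap
  split
  · -- even: goes to dOdd (prevP π j)
    set p := prevP π ⟨x.val / 2, by have := x.isLt; omega⟩ with hpdef
    have hjp : τ.r j p := hπτ (prevP_rel π _)
    have hip : τ.r i p := τ.iseqv.trans hij hjp
    have h1 : a ≤ p := Finset.min'_le _ _ (mem_blockOf.2 hip)
    have h2 : p ≤ b := Finset.le_max' _ _ (mem_blockOf.2 hip)
    simp only [dOdd, Fin.le_def] at *
    omega
  · set p := nextP ρ ⟨x.val / 2, by have := x.isLt; omega⟩ with hpdef
    have hjp : τ.r j p := hρτ (nextP_rel ρ _)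
    have hip : τ.r i p := τ.iseqv.trans hij hjp
    have h1 : a ≤ p := Finset.min'_le _ _ (mem_blockOf.2 hip)
    have h2 : p ≤ b := Finset.le_max' _ _ (mem_blockOf.2 hip)
    simp only [dEven, Fin.le_def] at *
    omega
end

section
/- If π ∧ ρ ≠ 0_n in NC(n), then the meandric system M_{π,ρ} is reducible, i.e., there exists a proper subinterval of {1,...,2n} invariant under M_{π,ρ}. -/
open scoped Classical

lemma block_subset_aux {n : ℕ} {S : Setoid (Fin n)} (hS : IsNC S) {i j k m : Fin n}
    (hij : S.r i j) (h1 : i < k) (h2 : k < j) (hkm : S.r k m) (hik : ¬ S.r i k) :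
    i < m ∧ m < j := by
  rcases lt_trichotomy m i with hm | hm | hm
  · exact absurd (S.trans (S.symm (hS m i k j hm h1 h2 (S.symm hkm) hij)) (S.symm hkm)) hik
  · exact absurd (S.symm (hm ▸ hkm)) hik
  · rcases lt_trichotomy m j with hm2 | hm2 | hm2
    · exact ⟨hm, hm2⟩
    · exact absurd (S.trans hij (S.symm (hm2 ▸ hkm))) hik
    · exact absurd (hS i k j m h1 h2 hm2 hij hkm) hik

lemma prevP_bounds {n : ℕ} {S : Setoid (Fin n)} (hS : IsNC S) {i j k : Fin n}
    (hij : S.r i j) (h1 : i < k) (h2 : k ≤ j) : i ≤ prevP S k ∧ prevP S k < j := by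
  by_cases hik : S.r i k
  · have hmem : i ∈ (blockOf S k).filter (fun m => m < k) :=
      Finset.mem_filter.mpr ⟨mem_blockOf.mpr (S.symm hik), h1⟩
    have hne : ((blockOf S k).filter (fun m => m < k)).Nonempty := ⟨i, hmem⟩
    rw [prevP, dif_pos hne]
    refine ⟨Finset.le_max' _ i hmem, ?_⟩
    have hm := Finset.max'_mem _ hne
    simp only [Finset.mem_filter] at hm
    exact lt_of_lt_of_le hm.2 h2
  · have h2' : k < j := lt_of_le_of_ne h2 (fun e => hik (by rw [e]; exact hij))
    have key : ∀ m ∈ blockOf S k, i < m ∧ m < j := fun m hm =>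
      block_subset_aux hS hij h1 h2' (mem_blockOf.mp hm) hik
    rw [prevP]
    split
    · next hne =>
        have hm := Finset.max'_mem _ hne
        have := key _ (Finset.mem_filter.mp hm).1
        exact ⟨le_of_lt this.1, this.2⟩
    · next _ =>
        have hm := Finset.max'_mem _ (blockOf_nonempty S k)
        have := key _ hm
        exact ⟨le_of_lt this.1, this.2⟩

lemma nextP_bounds {n : ℕ} {S : Setoid (Fin n)} (hS : IsNC S) {i j k : Fin n}
    (hij : S.r i j) (h1 : i ≤ k) (h2 : k < j) : i < nextP S k ∧ nextP S k ≤ j := by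
  by_cases hik : S.r i k
  · have hmem : j ∈ (blockOf S k).filter (fun m => k < m) :=
      Finset.mem_filter.mpr ⟨mem_blockOf.mpr (S.trans (S.symm hik) hij), h2⟩
    have hne : ((blockOf S k).filter (fun m => k < m)).Nonempty := ⟨j, hmem⟩
    rw [nextP, dif_pos hne]
    refine ⟨?_, Finset.min'_le _ j hmem⟩
    have hm := Finset.min'_mem _ hne
    simp only [Finset.mem_filter] at hm
    exact lt_of_le_of_lt h1 hm.2
  · have h1' : i < k := lt_of_le_of_ne h1 (fun e => hik (by rw [e]))
    have key : ∀ m ∈ blockOf S k, i < m ∧ m < j := fun m hm =>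
      block_subset_aux hS hij h1' h2 (mem_blockOf.mp hm) hik
    rw [nextP]
    split
    · next hne =>
        have hm := Finset.min'_mem _ hne
        have := key _ (Finset.mem_filter.mp hm).1
        exact ⟨this.1, le_of_lt this.2⟩
    · next _ =>
        have hm := Finset.min'_mem _ (blockOf_nonempty S k)
        have := key _ hm
        exact ⟨this.1, le_of_lt this.2⟩

/-- If `π ∧ ρ ≠ 0_n` in `NC(n)` then `M_{π,ρ}` is reducible. -/
theorem reducible_of_meet_ne_bot (n : ℕ) (π ρ : Setoid (Fin n))
    (hπ : IsNC π) (hρ : IsNC ρ) (h : π ⊓ ρ ≠ ⊥) :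
    Reducible π ρ := by
  have hw : ∃ i j : Fin n, i < j ∧ π.r i j ∧ ρ.r i j := by
    by_contra hc
    push_neg at hc
    apply h
    apply Setoid.ext
    intro a b
    show π.r a b ∧ ρ.r a b ↔ a = b
    constructor
    · rintro ⟨h1, h2⟩
      rcases lt_trichotomy a b with hab | hab | hab
      · exact absurd h2 (hc a b hab h1)
      · exact hab
      · exact absurd (ρ.symm h2) (hc b a hab (π.symm h1))
    · rintro rfl
      exact ⟨π.refl a, ρ.refl a⟩
  obtain ⟨i, j, hij, hπr, hρr⟩ := hw
  refine ⟨dOdd i, dEven j, ?_, ?_, ?_⟩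
  · have : i.val < j.val := hij
    simp only [Fin.le_def, dOdd, dEven]
    omega
  · have hji : j.val < n := j.isLt
    have : i.val < j.val := hij
    simp only [dOdd, dEven]
    omega
  · intro x hx
    obtain ⟨hax, hxb⟩ := hx
    have hax' : 2 * i.val + 1 ≤ x.val := hax
    have hxb' : x.val ≤ 2 * j.val := hxb
    unfold meanderMap
    split
    · next hev =>
      set k : Fin n := ⟨x.val / 2, by have := x.isLt; omega⟩ with hk
      have hik : i < k := by
        show i.val < x.val / 2
        omega
      have hkj : k ≤ j := by
        show x.val / 2 ≤ j.val
        omega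
      obtain ⟨hl, hr⟩ := prevP_bounds hπ hπr hik hkj
      have hl' : i.val ≤ (prevP π k).val := hl
      have hr' : (prevP π k).val < j.val := hr
      constructor
      · show 2 * i.val + 1 ≤ 2 * (prevP π k).val + 1
        omega
      · show 2 * (prevP π k).val + 1 ≤ 2 * j.val
        omega
    · next hev =>
      set k : Fin n := ⟨x.val / 2, by have := x.isLt; omega⟩ with hk
      have hik : i ≤ k := by
        show i.val ≤ x.val / 2
        omega
      have hkj : k < j := by
        show x.val / 2 < j.val
        omega
      obtain ⟨hl, hr⟩ := nextP_bounds hρ hρr hik hkj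
      have hl' : i.val < (nextP ρ k).val := hl
      have hr' : (nextP ρ k).val ≤ j.val := hr
      constructor
      · show 2 * i.val + 1 ≤ 2 * (nextP ρ k).val
        omega
      · show 2 * (nextP ρ k).val ≤ 2 * j.val
        omega
end

section
/- For all n ∈ ℕ: |{(π,ρ) ∈ NC(n)² : π ∧ ρ = 0_n}| = Σ_{π ∈ NC(n)} Π_{V ∈ π} m^{irr}_{|V|}, where m^{irr}_k := |{(α,β) ∈ NC(k)² : α ∨ β = 1_k and α ∧ β = 0_k}|. -/
open scoped Classical

section Aux
variable {m : ℕ} {π ρ τ S : Setoid (Fin m)}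

instance setoidFinite {α : Type*} [Finite α] : Finite (Setoid α) :=
  Finite.of_injective (fun S => S.r) (fun S T h => by cases S; cases T; congr)

lemma isNC_top : IsNC (⊤ : Setoid (Fin m)) := fun _ _ _ _ _ _ _ _ _ => trivial

lemma isNC_ncJoin (π ρ : Setoid (Fin m)) : IsNC (ncJoin π ρ) := by
  intro a b c d hab hbc hcd hac hbd
  intro τ' hτ'
  exact hτ'.1 a b c d hab hbc hcd (hac τ' hτ') (hbd τ' hτ')

lemma le_ncJoin_left : π ≤ ncJoin π ρ := le_sInf fun τ hτ => hτ.2.1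
lemma le_ncJoin_right : ρ ≤ ncJoin π ρ := le_sInf fun τ hτ => hτ.2.2
lemma ncJoin_le (hτ : IsNC τ) (h1 : π ≤ τ) (h2 : ρ ≤ τ) : ncJoin π ρ ≤ τ := sInf_le ⟨hτ, h1, h2⟩

lemma rel_of_mem_class {B : Set (Fin m)} (hB : B ∈ S.classes) {x y : Fin m}
    (hx : x ∈ B) (hy : y ∈ B) : S.r x y := by
  rw [show S.r x y ↔ S x y from Iff.rfl, Setoid.rel_iff_exists_classes]
  exact ⟨B, hB, hx, hy⟩

lemma mem_class_of_rel {B : Set (Fin m)} (hB : B ∈ S.classes) {x y : Fin m}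
    (hx : x ∈ B) (hxy : S.r x y) : y ∈ B := by
  obtain ⟨w, rfl⟩ := hB
  exact S.trans' (S.symm' hxy) hx

end Aux

section Blk
variable {n : ℕ}

noncomputable def blkEmb (B : Set (Fin n)) : Fin B.ncard → Fin n :=
  fun i => (B.toFinset.orderIsoOfFin (by rw [Set.ncard_eq_toFinset_card']) i : Fin n)

lemma blkEmb_mem (B : Set (Fin n)) (i : Fin B.ncard) : blkEmb B i ∈ B :=
  Set.mem_toFinset.mp (B.toFinset.orderIsoOfFin (by rw [Set.ncard_eq_toFinset_card']) i).2

lemma blkEmb_strictMono (B : Set (Fin n)) : StrictMono (blkEmb B) := by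
  intro i j hij
  exact (B.toFinset.orderIsoOfFin (h := by rw [Set.ncard_eq_toFinset_card'])).strictMono hij

lemma blkEmb_inj (B : Set (Fin n)) : Function.Injective (blkEmb B) :=
  (blkEmb_strictMono B).injective

lemma blkEmb_surj (B : Set (Fin n)) {x : Fin n} (hx : x ∈ B) : ∃ i, blkEmb B i = x := by
  refine ⟨(B.toFinset.orderIsoOfFin (by rw [Set.ncard_eq_toFinset_card'])).symm
    ⟨x, by simpa [Set.mem_toFinset] using hx⟩, ?_⟩
  simp [blkEmb]

noncomputable def restr (B : Set (Fin n)) (π : Setoid (Fin n)) : Setoid (Fin B.ncard) :=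
  Setoid.comap (blkEmb B) π

lemma restr_rel {B : Set (Fin n)} {π : Setoid (Fin n)} {i j : Fin B.ncard} :
    (restr B π).r i j ↔ π.r (blkEmb B i) (blkEmb B j) := Iff.rfl

lemma isNC_restr {B : Set (Fin n)} {π : Setoid (Fin n)} (hπ : IsNC π) : IsNC (restr B π) :=
  fun _ _ _ _ hab hbc hcd hac hbd =>
    hπ _ _ _ _ (blkEmb_strictMono B hab) (blkEmb_strictMono B hbc)
      (blkEmb_strictMono B hcd) hac hbd

lemma restr_mono {B : Set (Fin n)} {π τ : Setoid (Fin n)} (h : π ≤ τ) : restr B π ≤ restr B τ :=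
  fun _ _ hij => h hij

lemma isNC_of_restr {S π : Setoid (Fin n)} (hS : IsNC S) (hle : π ≤ S)
    (h : ∀ B ∈ S.classes, IsNC (restr B π)) : IsNC π := by
  intro a b c d hab hbc hcd hac hbd
  have hSac : S.r a c := hle hac
  have hSbd : S.r b d := hle hbd
  have hSab : S.r a b := hS a b c d hab hbc hcd hSac hSbd
  set B : Set (Fin n) := {z | S.r z a} with hBdef
  have hB : B ∈ S.classes := S.mem_classes a
  have haB : a ∈ B := S.refl' a
  have hbB : b ∈ B := mem_class_of_rel hB haB hSab
  have hcB : c ∈ B := mem_class_of_rel hB haB hSac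
  have hdB : d ∈ B := mem_class_of_rel hB hbB hSbd
  obtain ⟨ia, hia⟩ := blkEmb_surj B haB
  obtain ⟨ib, hib⟩ := blkEmb_surj B hbB
  obtain ⟨ic, hic⟩ := blkEmb_surj B hcB
  obtain ⟨id, hid⟩ := blkEmb_surj B hdB
  have h1 : ia < ib := (blkEmb_strictMono B).lt_iff_lt.mp (by rw [hia, hib]; exact hab)
  have h2 : ib < ic := (blkEmb_strictMono B).lt_iff_lt.mp (by rw [hib, hic]; exact hbc)
  have h3 : ic < id := (blkEmb_strictMono B).lt_iff_lt.mp (by rw [hic, hid]; exact hcd)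
  have := h B hB ia ib ic id h1 h2 h3
    (by rw [restr_rel, hia, hic]; exact hac) (by rw [restr_rel, hib, hid]; exact hbd)
  rw [restr_rel, hia, hib] at this
  exact this

lemma meet_bot_iff {S π ρ : Setoid (Fin n)} (hπ : π ≤ S) (hρ : ρ ≤ S) :
    π ⊓ ρ = ⊥ ↔ ∀ B ∈ S.classes, restr B π ⊓ restr B ρ = ⊥ := by
  constructor
  · intro h B hB
    rw [eq_bot_iff, Setoid.le_def]
    intro i j hij
    have : (π ⊓ ρ).r (blkEmb B i) (blkEmb B j) := hij
    rw [h] at this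
    exact blkEmb_inj B this
  · intro h
    rw [eq_bot_iff, Setoid.le_def]
    intro x y hxy
    have hSxy : S.r x y := hπ hxy.1
    set B : Set (Fin n) := {z | S.r z x} with hBdef
    have hB : B ∈ S.classes := S.mem_classes x
    have hxB : x ∈ B := S.refl' x
    have hyB : y ∈ B := mem_class_of_rel hB hxB hSxy
    obtain ⟨i, hi⟩ := blkEmb_surj B hxB
    obtain ⟨j, hj⟩ := blkEmb_surj B hyB
    have hrel : (restr B π ⊓ restr B ρ).r i j := by
      constructor
      · rw [restr_rel, hi, hj]; exact hxy.1
      · rw [restr_rel, hi, hj]; exact hxy.2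
    rw [h B hB] at hrel
    rw [← hi, ← hj, hrel]
end Blk

section Split
variable {n : ℕ}

noncomputable def splitSetoid (S : Setoid (Fin n)) (B : Set (Fin n))
    (τ : Setoid (Fin B.ncard)) : Setoid (Fin n) where
  r x y := (∃ i j, blkEmb B i = x ∧ blkEmb B j = y ∧ τ.r i j) ∨ x = y ∨
    (x ∉ B ∧ y ∉ B ∧ S.r x y)
  iseqv := by
    refine ⟨fun x => Or.inr (Or.inl rfl), ?_, ?_⟩
    · rintro x y (⟨i, j, hi, hj, hij⟩ | rfl | ⟨hx, hy, hxy⟩)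
      · exact Or.inl ⟨j, i, hj, hi, τ.symm' hij⟩
      · exact Or.inr (Or.inl rfl)
      · exact Or.inr (Or.inr ⟨hy, hx, S.symm' hxy⟩)
    · rintro x y z (⟨i, j, hi, hj, hij⟩ | rfl | ⟨hx, hy, hxy⟩)
        (⟨i', j', hi', hj', hij'⟩ | rfl | ⟨hy', hz, hyz⟩)
      · obtain rfl : j = i' := blkEmb_inj B (by rw [hj, hi'])
        exact Or.inl ⟨i, j', hi, hj', τ.trans' hij hij'⟩
      · exact Or.inl ⟨i, j, hi, hj, hij⟩
      · exact absurd (hj ▸ blkEmb_mem B j) hy'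
      · exact Or.inl ⟨i', j', hi', hj', hij'⟩
      · exact Or.inr (Or.inl rfl)
      · exact Or.inr (Or.inr ⟨hy', hz, hyz⟩)
      · exact absurd (hi' ▸ blkEmb_mem B i') hy
      · exact Or.inr (Or.inr ⟨hx, hy, hxy⟩)
      · exact Or.inr (Or.inr ⟨hx, hz, S.trans' hxy hyz⟩)

lemma splitSetoid_rel {S : Setoid (Fin n)} {B : Set (Fin n)} {τ : Setoid (Fin B.ncard)}
    {x y : Fin n} : (splitSetoid S B τ).r x y ↔
      ((∃ i j, blkEmb B i = x ∧ blkEmb B j = y ∧ τ.r i j) ∨ x = y ∨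
        (x ∉ B ∧ y ∉ B ∧ S.r x y)) := Iff.rfl

lemma isNC_splitSetoid {S : Setoid (Fin n)} (hS : IsNC S) {B : Set (Fin n)}
    (hB : B ∈ S.classes) {τ : Setoid (Fin B.ncard)} (hτ : IsNC τ) :
    IsNC (splitSetoid S B τ) := by
  intro a b c d hab hbc hcd hac hbd
  rcases hac with ⟨ia, ic, hia, hic, hiac⟩ | rfl | ⟨haB, hcB, hSac⟩
  · rcases hbd with ⟨ib, id, hib, hid, hibd⟩ | rfl | ⟨hbB, hdB, hSbd⟩
    · have h1 : ia < ib := (blkEmb_strictMono B).lt_iff_lt.mp (by rw [hia, hib]; exact hab)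
      have h2 : ib < ic := (blkEmb_strictMono B).lt_iff_lt.mp (by rw [hib, hic]; exact hbc)
      have h3 : ic < id := (blkEmb_strictMono B).lt_iff_lt.mp (by rw [hic, hid]; exact hcd)
      exact Or.inl ⟨ia, ib, hia, hib, hτ ia ib ic id h1 h2 h3 hiac hibd⟩
    · exact absurd (hbc.trans hcd) (lt_irrefl _)
    · have hSac : S.r a c := rel_of_mem_class hB (hia ▸ blkEmb_mem B ia) (hic ▸ blkEmb_mem B ic)
      have hSab : S.r a b := hS a b c d hab hbc hcd hSac hSbd
      exact absurd (mem_class_of_rel hB (hia ▸ blkEmb_mem B ia) hSab) hbB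
  · exact absurd (hab.trans hbc) (lt_irrefl _)
  · rcases hbd with ⟨ib, id, hib, hid, hibd⟩ | rfl | ⟨hbB, hdB, hSbd⟩
    · have hSbd : S.r b d := rel_of_mem_class hB (hib ▸ blkEmb_mem B ib) (hid ▸ blkEmb_mem B id)
      have hSab : S.r a b := hS a b c d hab hbc hcd hSac hSbd
      exact absurd (mem_class_of_rel hB (hib ▸ blkEmb_mem B ib) (S.symm' hSab)) haB
    · exact absurd (hbc.trans hcd) (lt_irrefl _)
    · exact Or.inr (Or.inr ⟨haB, hbB, hS a b c d hab hbc hcd hSac hSbd⟩)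

lemma le_splitSetoid {S π : Setoid (Fin n)} {B : Set (Fin n)} (hB : B ∈ S.classes)
    {τ : Setoid (Fin B.ncard)} (hπS : π ≤ S) (hπτ : restr B π ≤ τ) :
    π ≤ splitSetoid S B τ := by
  rw [Setoid.le_def]
  intro x y hxy
  have hSxy : S.r x y := hπS hxy
  by_cases hxB : x ∈ B
  · have hyB : y ∈ B := mem_class_of_rel hB hxB hSxy
    obtain ⟨i, hi⟩ := blkEmb_surj B hxB
    obtain ⟨j, hj⟩ := blkEmb_surj B hyB
    refine Or.inl ⟨i, j, hi, hj, hπτ ?_⟩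
    rw [restr_rel, hi, hj]; exact hxy
  · have hyB : y ∉ B := fun hyB => hxB (mem_class_of_rel hB hyB (S.symm' hSxy))
    exact Or.inr (Or.inr ⟨hxB, hyB, hSxy⟩)

lemma restr_ncJoin_top {S π ρ : Setoid (Fin n)} (hS : IsNC S)
    (hj : ncJoin π ρ = S) {B : Set (Fin n)} (hB : B ∈ S.classes) :
    ncJoin (restr B π) (restr B ρ) = ⊤ := by
  have hπS : π ≤ S := hj ▸ le_ncJoin_left
  have hρS : ρ ≤ S := hj ▸ le_ncJoin_right
  have key : ∀ τ : Setoid (Fin B.ncard), IsNC τ → restr B π ≤ τ → restr B ρ ≤ τ → τ = ⊤ := by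
    intro τ hτ h1 h2
    have hτ'NC : IsNC (splitSetoid S B τ) := isNC_splitSetoid hS hB hτ
    have hπτ' : π ≤ splitSetoid S B τ := le_splitSetoid hB hπS h1
    have hρτ' : ρ ≤ splitSetoid S B τ := le_splitSetoid hB hρS h2
    have hSτ' : S ≤ splitSetoid S B τ := by
      have := ncJoin_le hτ'NC hπτ' hρτ'
      rwa [hj] at this
    rw [Setoid.eq_top_iff]
    intro i j
    have hrel : (splitSetoid S B τ).r (blkEmb B i) (blkEmb B j) :=
      hSτ' (rel_of_mem_class hB (blkEmb_mem B i) (blkEmb_mem B j))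
    rcases hrel with ⟨i', j', hi', hj', hij'⟩ | heq | ⟨hx, _, _⟩
    · obtain rfl : i' = i := blkEmb_inj B hi'
      obtain rfl : j' = j := blkEmb_inj B hj'
      exact hij'
    · obtain rfl : i = j := blkEmb_inj B heq
      exact τ.refl' i
    · exact absurd (blkEmb_mem B i) hx
  refine le_antisymm le_top (le_sInf ?_)
  rintro τ ⟨hτ, h1, h2⟩
  exact (key τ hτ h1 h2).ge

lemma ncJoin_eq_of_restr_top {S π ρ : Setoid (Fin n)} (hS : IsNC S)
    (hπS : π ≤ S) (hρS : ρ ≤ S)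
    (h : ∀ B ∈ S.classes, ncJoin (restr B π) (restr B ρ) = ⊤) :
    ncJoin π ρ = S := by
  refine le_antisymm (ncJoin_le hS hπS hρS) (le_sInf ?_)
  rintro τ ⟨hτ, h1, h2⟩
  rw [Setoid.le_def]
  intro x y hxy
  set B : Set (Fin n) := {z | S.r z x} with hBdef
  have hB : B ∈ S.classes := S.mem_classes x
  have hxB : x ∈ B := S.refl' x
  have hyB : y ∈ B := mem_class_of_rel hB hxB hxy
  have htop : restr B τ = ⊤ := by
    have h' : ncJoin (restr B π) (restr B ρ) ≤ restr B τ :=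
      ncJoin_le (isNC_restr hτ) (restr_mono h1) (restr_mono h2)
    rw [h B hB] at h'
    exact le_antisymm le_top h'
  obtain ⟨i, hi⟩ := blkEmb_surj B hxB
  obtain ⟨j, hj⟩ := blkEmb_surj B hyB
  have : (restr B τ).r i j := by rw [htop]; trivial
  rw [restr_rel, hi, hj] at this
  exact this

end Split

section Glue
variable {n : ℕ}

noncomputable def glueSetoid (S : Setoid (Fin n))
    (σ : ∀ B : S.classes, Setoid (Fin (B : Set (Fin n)).ncard)) : Setoid (Fin n) where
  r x y := ∃ (B : S.classes) (i j : Fin (B : Set (Fin n)).ncard),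
      blkEmb B.1 i = x ∧ blkEmb B.1 j = y ∧ (σ B).r i j
  iseqv := by
    refine ⟨?_, ?_, ?_⟩
    · intro x
      obtain ⟨i, hi⟩ := blkEmb_surj {z | S.r z x} (S.refl' x)
      refine ⟨⟨{z | S.r z x}, S.mem_classes x⟩, i, i, hi, hi, ?_⟩
      exact (σ ⟨{z | S.r z x}, S.mem_classes x⟩).refl' i
    · rintro x y ⟨B, i, j, hi, hj, hij⟩
      exact ⟨B, j, i, hj, hi, (σ B).symm' hij⟩
    · rintro x y z ⟨B, i, j, hi, hj, hij⟩ ⟨B', i', j', hi', hj', hij'⟩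
      obtain rfl : B = B' := Subtype.ext
        (Setoid.eq_of_mem_classes B.2 (hj ▸ blkEmb_mem B.1 j) B'.2 (hi' ▸ blkEmb_mem B'.1 i'))
      obtain rfl : j = i' := blkEmb_inj B.1 (by rw [hj, hi'])
      exact ⟨B, i, j', hi, hj', (σ B).trans' hij hij'⟩

lemma glueSetoid_le (S : Setoid (Fin n))
    (σ : ∀ B : S.classes, Setoid (Fin (B : Set (Fin n)).ncard)) : glueSetoid S σ ≤ S := by
  rw [Setoid.le_def]
  rintro x y ⟨B, i, j, hi, hj, _⟩
  exact rel_of_mem_class B.2 (hi ▸ blkEmb_mem B.1 i) (hj ▸ blkEmb_mem B.1 j)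

lemma restr_glueSetoid (S : Setoid (Fin n))
    (σ : ∀ B : S.classes, Setoid (Fin (B : Set (Fin n)).ncard)) (B : S.classes) :
    restr B.1 (glueSetoid S σ) = σ B := by
  refine Setoid.ext fun i j => ?_
  constructor
  · rintro ⟨B', i', j', hi', hj', hij'⟩
    obtain rfl : B = B' := Subtype.ext
      (Setoid.eq_of_mem_classes B.2 (blkEmb_mem B.1 i) B'.2 (hi' ▸ blkEmb_mem B'.1 i'))
    obtain rfl : i' = i := blkEmb_inj B.1 hi'
    obtain rfl : j' = j := blkEmb_inj B.1 hj'
    exact hij'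
  · intro h
    exact ⟨B, i, j, rfl, rfl, h⟩

lemma glueSetoid_restr {S π : Setoid (Fin n)} (hπS : π ≤ S) :
    glueSetoid S (fun B => restr B.1 π) = π := by
  refine Setoid.ext fun x y => ?_
  constructor
  · rintro ⟨B, i, j, hi, hj, hij⟩
    rw [restr_rel, hi, hj] at hij
    exact hij
  · intro hxy
    have hSxy : S.r x y := hπS hxy
    have hB : {z | S.r z x} ∈ S.classes := S.mem_classes x
    have hxB : x ∈ {z | S.r z x} := S.refl' x
    have hyB : y ∈ {z | S.r z x} := mem_class_of_rel hB hxB hSxy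
    obtain ⟨i, hi⟩ := blkEmb_surj _ hxB
    obtain ⟨j, hj⟩ := blkEmb_surj _ hyB
    refine ⟨⟨_, hB⟩, i, j, hi, hj, ?_⟩
    rw [restr_rel, hi, hj]
    exact hxy

end Glue

section Decomp
variable {n : ℕ}

/-- irreducible pairs on `Fin k` (matching `mirr`). -/
def IrrPairs (k : ℕ) : Type :=
  {pr : Setoid (Fin k) × Setoid (Fin k) //
    IsNC pr.1 ∧ IsNC pr.2 ∧ ncJoin pr.1 pr.2 = ⊤ ∧ pr.1 ⊓ pr.2 = ⊥}

/-- pairs with meet ⊥ and join exactly `S`. -/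
def GoodPairs (n : ℕ) (S : Setoid (Fin n)) : Type :=
  {pr : Setoid (Fin n) × Setoid (Fin n) //
    (IsNC pr.1 ∧ IsNC pr.2 ∧ pr.1 ⊓ pr.2 = ⊥) ∧ ncJoin pr.1 pr.2 = S}

noncomputable def goodPairsEquiv (S : Setoid (Fin n)) (hS : IsNC S) :
    GoodPairs n S ≃ ∀ B : S.classes, IrrPairs (B : Set (Fin n)).ncard where
  toFun pr := fun B =>
    ⟨(restr B.1 pr.1.1, restr B.1 pr.1.2),
      isNC_restr pr.2.1.1, isNC_restr pr.2.1.2.1,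
      restr_ncJoin_top hS pr.2.2 B.2,
      (meet_bot_iff (le_trans le_ncJoin_left (le_of_eq pr.2.2))
          (le_trans le_ncJoin_right (le_of_eq pr.2.2))).mp
        pr.2.1.2.2 B.1 B.2⟩
  invFun σ :=
    ⟨(glueSetoid S fun B => (σ B).1.1, glueSetoid S fun B => (σ B).1.2), by
      have h1 : ∀ B : S.classes, restr B.1 (glueSetoid S fun B => (σ B).1.1) = (σ B).1.1 :=
        restr_glueSetoid S _
      have h2 : ∀ B : S.classes, restr B.1 (glueSetoid S fun B => (σ B).1.2) = (σ B).1.2 :=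
        restr_glueSetoid S _
      refine ⟨⟨?_, ?_, ?_⟩, ?_⟩
      · exact isNC_of_restr hS (glueSetoid_le S _)
          (fun B hB => by rw [h1 ⟨B, hB⟩]; exact (σ ⟨B, hB⟩).2.1)
      · exact isNC_of_restr hS (glueSetoid_le S _)
          (fun B hB => by rw [h2 ⟨B, hB⟩]; exact (σ ⟨B, hB⟩).2.2.1)
      · exact (meet_bot_iff (glueSetoid_le S _) (glueSetoid_le S _)).mpr
          (fun B hB => by rw [h1 ⟨B, hB⟩, h2 ⟨B, hB⟩]; exact (σ ⟨B, hB⟩).2.2.2.2)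
      · exact ncJoin_eq_of_restr_top hS (glueSetoid_le S _) (glueSetoid_le S _)
          (fun B hB => by rw [h1 ⟨B, hB⟩, h2 ⟨B, hB⟩]; exact (σ ⟨B, hB⟩).2.2.2.1)⟩
  left_inv := by
    intro pr
    refine Subtype.ext (Prod.ext ?_ ?_)
    · exact glueSetoid_restr (le_trans le_ncJoin_left (le_of_eq pr.2.2))
    · exact glueSetoid_restr (le_trans le_ncJoin_right (le_of_eq pr.2.2))
  right_inv := by
    intro σ
    funext B
    refine Subtype.ext (Prod.ext ?_ ?_)
    · exact restr_glueSetoid S _ B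
    · exact restr_glueSetoid S _ B

end Decomp


section Count
variable {n : ℕ}

lemma card_goodPairs (S : Setoid (Fin n)) (hS : IsNC S) :
    Nat.card (GoodPairs n S) = ∏ᶠ B ∈ S.classes, mirr B.ncard := by
  haveI : Fintype S.classes := Fintype.ofFinite _
  rw [Nat.card_congr (goodPairsEquiv S hS), Nat.card_pi,
    ← finprod_set_coe_eq_finprod_mem, finprod_eq_prod_of_fintype]
  rfl

def TotPairs (n : ℕ) : Type :=
  {pr : Setoid (Fin n) × Setoid (Fin n) // IsNC pr.1 ∧ IsNC pr.2 ∧ pr.1 ⊓ pr.2 = ⊥}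

noncomputable def joinMap (n : ℕ) : TotPairs n → {S : Setoid (Fin n) // IsNC S} :=
  fun pr => ⟨ncJoin pr.1.1 pr.1.2, isNC_ncJoin _ _⟩

def fiberEquiv (S0 : {S : Setoid (Fin n) // IsNC S}) :
    {pr : TotPairs n // joinMap n pr = S0} ≃ GoodPairs n S0.1 where
  toFun q := ⟨q.1.1, ⟨q.1.2, congrArg Subtype.val q.2⟩⟩
  invFun p := ⟨⟨p.1, p.2.1⟩, Subtype.ext p.2.2⟩
  left_inv q := rfl
  right_inv p := rfl

instance : Finite (TotPairs n) := by unfold TotPairs; infer_instance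
instance (S : Setoid (Fin n)) : Finite (GoodPairs n S) := by unfold GoodPairs; infer_instance

lemma card_tot (n : ℕ) :
    Nat.card (TotPairs n)
      = ∑ᶠ S ∈ {S : Setoid (Fin n) | IsNC S}, ∏ᶠ B ∈ Setoid.classes S, mirr B.ncard := by
  haveI : Fintype {S : Setoid (Fin n) // IsNC S} := Fintype.ofFinite _
  haveI : ∀ S0 : {S : Setoid (Fin n) // IsNC S}, Fintype {pr : TotPairs n // joinMap n pr = S0} :=
    fun S0 => Fintype.ofFinite _
  haveI : Fintype (TotPairs n) := Fintype.ofFinite _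
  have e1 : TotPairs n ≃ Σ S0 : {S : Setoid (Fin n) // IsNC S},
      {pr : TotPairs n // joinMap n pr = S0} := (Equiv.sigmaFiberEquiv (joinMap n)).symm
  rw [Nat.card_congr e1]
  rw [Nat.card_eq_fintype_card, Fintype.card_sigma]
  have : ∀ S0 : {S : Setoid (Fin n) // IsNC S},
      Fintype.card {pr : TotPairs n // joinMap n pr = S0}
        = ∏ᶠ B ∈ Setoid.classes S0.1, mirr B.ncard := by
    intro S0
    rw [← Nat.card_eq_fintype_card, Nat.card_congr (fiberEquiv S0)]
    exact card_goodPairs S0.1 S0.2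
  rw [Finset.sum_congr rfl (fun S0 _ => this S0)]
  rw [← finsum_eq_sum_of_fintype]
  exact finsum_set_coe_eq_finsum_mem (f := fun S => ∏ᶠ B ∈ Setoid.classes S, mirr B.ncard)
    {S : Setoid (Fin n) | IsNC S}

end Count


/-- `|{(π,ρ) ∈ NC(n)² : π ∧ ρ = 0_n}| = Σ_{π ∈ NC(n)} Π_{V ∈ π} m^{irr}_{|V|}`. -/
theorem card_meet_bot_eq_sum_mirr (n : ℕ) :
    Nat.card {pr : Setoid (Fin n) × Setoid (Fin n) //
        IsNC pr.1 ∧ IsNC pr.2 ∧ pr.1 ⊓ pr.2 = ⊥}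
      = ∑ᶠ S ∈ {S : Setoid (Fin n) | IsNC S},
          ∏ᶠ B ∈ Setoid.classes S, mirr B.ncard := by
  exact card_tot n
end
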